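/- Let K1 and K2 be two minimal X–Y separators of G. Then K1 ≤ K2 if and only if K1 \ K2 ⊆ NR(G,Y,K2). -/

import Mathlib

variable {V : Type*}

/-- `K` is an `X`–`Y` separator of `G`: `K` avoids `X ∪ Y` and every walk
from a vertex of `X` to a vertex of `Y` meets `K` (i.e. there is no
`X`–`Y` path in `G \ K`). -/
def IsSeparator (G : SimpleGraph V) (X Y K : Set V) : Prop :=
  K ⊆ (X ∪ Y)ᶜ ∧
  ∀ x ∈ X, ∀ y ∈ Y, ∀ w : G.Walk x y, ∃ v ∈ w.support, v ∈ K

/-- `NR G A B`: the vertices of `G \ B` that are not reachable from `A` in `G \ B`. -/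
def NR (G : SimpleGraph V) (A B : Set V) : Set V :=
  {v | v ∉ B ∧ ¬ ∃ a ∈ A, ∃ w : G.Walk a v, ∀ x ∈ w.support, x ∉ B}

/-- `Reach G A B`: the vertices reachable from `A` in `G \ B`. -/
def Reach (G : SimpleGraph V) (A B : Set V) : Set V :=
  {v | ∃ a ∈ A, ∃ w : G.Walk a v, ∀ x ∈ w.support, x ∉ B}

/-- The order on `X`–`Y` separators: `K1 ≤ K2` iff `NR(G,Y,K1) ⊆ NR(G,Y,K2)`. -/
def SepLE (G : SimpleGraph V) (Y K1 K2 : Set V) : Prop :=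
  NR G Y K1 ⊆ NR G Y K2

/-- The strict order on `X`–`Y` separators. -/
def SepLT (G : SimpleGraph V) (Y K1 K2 : Set V) : Prop :=
  NR G Y K1 ⊆ NR G Y K2 ∧ NR G Y K1 ≠ NR G Y K2

/-- A minimal `X`–`Y` separator: no proper subset is an `X`–`Y` separator. -/
def IsMinimalSeparator (G : SimpleGraph V) (X Y K : Set V) : Prop :=
  IsSeparator G X Y K ∧ ∀ K' ⊂ K, ¬ IsSeparator G X Y K'

/-- An important `X`–`Y` separator: a minimal separator `K` such that there is
no separator `K'` with `K < K'` and `|K'| ≤ |K|`. -/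
def IsImportantSeparator (G : SimpleGraph V) (X Y K : Set V) : Prop :=
  IsMinimalSeparator G X Y K ∧
  ¬ ∃ K', IsSeparator G X Y K' ∧ SepLT G Y K K' ∧ K'.ncard ≤ K.ncard

/-- The minimum size of an `X`–`Y` separator of `G`. -/
noncomputable def minSepSize (G : SimpleGraph V) (X Y : Set V) : ℕ :=
  sInf {n | ∃ K, IsSeparator G X Y K ∧ K.ncard = n}

/-- The excess of a separator: its size minus the minimum separator size. -/
noncomputable def excess (G : SimpleGraph V) (X Y K : Set V) : ℕ :=
  K.ncard - minSepSize G X Y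

/-- The graph `Pr(G,X,Y,K)`: the vertices `NR(G,Y,K) \ X` are deleted (here:
made isolated), and every vertex of `X` is made adjacent to every vertex of `K`. -/
def PrGraph (G : SimpleGraph V) (X Y K : Set V) : SimpleGraph V where
  Adj u v := u ≠ v ∧ u ∉ NR G Y K \ X ∧ v ∉ NR G Y K \ X ∧
    (G.Adj u v ∨ (u ∈ X ∧ v ∈ K) ∨ (u ∈ K ∧ v ∈ X))
  symm := by
    refine ⟨?_⟩
    rintro u v ⟨h1, h2, h3, h4⟩
    refine ⟨h1.symm, h3, h2, ?_⟩
    rcases h4 with h | h | h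
    · exact Or.inl h.symm
    · exact Or.inr (Or.inr ⟨h.2, h.1⟩)
    · exact Or.inr (Or.inl ⟨h.2, h.1⟩)
  loopless := by refine ⟨?_⟩; rintro v ⟨h1, -⟩; exact h1 rfl

/-- `NSet G X` is `N(X)`: the set of vertices outside `X` adjacent to a vertex of `X`. -/
def NSet (G : SimpleGraph V) (X : Set V) : Set V :=
  {v | v ∉ X ∧ ∃ x ∈ X, G.Adj x v}

/-- `G` is `X`–`Y` normalized: `N(X)` is an `X`–`Y` separator and is
the unique smallest `X`–`Y` separator. -/
def Normalized (G : SimpleGraph V) (X Y : Set V) : Prop :=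
  IsSeparator G X Y (NSet G X) ∧
  ∀ K, IsSeparator G X Y K → K ≠ NSet G X → (NSet G X).ncard < K.ncard

/-- The cover excess `CE(S)`: the minimum excess of an `X`–`Y` separator disjoint from `S`. -/
noncomputable def CE (G : SimpleGraph V) (X Y S : Set V) : ℕ :=
  sInf {n | ∃ K, IsSeparator G X Y K ∧ Disjoint K S ∧ excess G X Y K = n}

/-- A witness of `S`: an `X`–`Y` separator disjoint from `S` whose excess equals `CE(S)`. -/
noncomputable def IsWitness (G : SimpleGraph V) (X Y S K : Set V) : Prop :=
  IsSeparator G X Y K ∧ Disjoint K S ∧ excess G X Y K = CE G X Y S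

/-- An important witness of `S`: a witness of `S` that is an important `X`–`Y` separator. -/
noncomputable def IsImportantWitness (G : SimpleGraph V) (X Y S K : Set V) : Prop :=
  IsWitness G X Y S K ∧ IsImportantSeparator G X Y K

/-- First-hit lemma: if a walk meets a set `S`, then there is an initial
segment ending at the first vertex of `S` on the walk. -/
lemma firstHit {V : Type*} {G : SimpleGraph V} {a b : V} (w : G.Walk a b) (S : Set V)
    (h : ∃ x ∈ w.support, x ∈ S) :
    ∃ u ∈ S, ∃ w' : G.Walk a u,
      (∀ z ∈ w'.support, z ∈ S → z = u) ∧ ∀ z ∈ w'.support, z ∈ w.support := by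
  induction w with
  | nil =>
    obtain ⟨x, hx, hxS⟩ := h
    simp only [SimpleGraph.Walk.support_nil, List.mem_singleton] at hx
    subst hx
    exact ⟨x, hxS, SimpleGraph.Walk.nil, by simp, by simp⟩
  | @cons a c b hadj p ih =>
    by_cases haS : a ∈ S
    · exact ⟨a, haS, SimpleGraph.Walk.nil, by simp, by simp⟩
    · obtain ⟨x, hx, hxS⟩ := h
      rw [SimpleGraph.Walk.support_cons, List.mem_cons] at hx
      rcases hx with rfl | hx
      · exact absurd hxS haS
      · obtain ⟨u, huS, w', h1, h2⟩ := ih ⟨x, hx, hxS⟩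
        refine ⟨u, huS, SimpleGraph.Walk.cons hadj w', ?_, ?_⟩
        · intro z hz hzS
          rw [SimpleGraph.Walk.support_cons, List.mem_cons] at hz
          rcases hz with rfl | hz
          · exact absurd hzS haS
          · exact h1 z hz hzS
        · intro z hz
          rw [SimpleGraph.Walk.support_cons, List.mem_cons] at hz ⊢
          rcases hz with rfl | hz
          · exact Or.inl rfl
          · exact Or.inr (h2 z hz)

/-- Let `K1`, `K2` be two minimal `X`–`Y` separators of `G`.
Then `K1 ≤ K2` if and only if `K1 \ K2 ⊆ NR(G,Y,K2)`. -/
theorem minimalSeparator_le_iff_diff_subset_NR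
    {V : Type*} [Fintype V] (G : SimpleGraph V) (X Y K1 K2 : Set V)
    (hXY : Disjoint X Y)
    (hK1 : IsMinimalSeparator G X Y K1) (hK2 : IsMinimalSeparator G X Y K2) :
    SepLE G Y K1 K2 ↔ K1 \ K2 ⊆ NR G Y K2 := by
  constructor
  · -- forward
    intro hle v hv
    obtain ⟨hvK1, hvK2⟩ := hv
    refine ⟨hvK2, ?_⟩
    rintro ⟨y, hy, W, hW⟩
    -- by minimality of K1, K1 \ {v} is not a separator
    have hne : ¬ IsSeparator G X Y (K1 \ {v}) :=
      hK1.2 (K1 \ {v}) (Set.sdiff_singleton_ssubset.mpr hvK1)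
    have hsub' : (K1 \ {v}) ⊆ (X ∪ Y)ᶜ := Set.diff_subset.trans hK1.1.1
    have hne2 : ∃ x ∈ X, ∃ y'' ∈ Y, ∃ P : G.Walk x y'',
        ∀ z ∈ P.support, z ∈ K1 → z = v := by
      by_contra hcon
      push_neg at hcon
      refine hne ⟨hsub', fun x hx y'' hy'' P => ?_⟩
      obtain ⟨z, hz, hzK1, hzv⟩ := hcon x hx y'' hy'' P
      exact ⟨z, hz, hzK1, hzv⟩
    obtain ⟨x, hx, y', hy', P, hP⟩ := hne2
    obtain ⟨z0, hz0s, hz0K1⟩ := hK1.1.2 x hx y' hy' P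
    obtain ⟨u, huS, Q, hQ1, hQ2⟩ := firstHit P (K1 ∪ K2) ⟨z0, hz0s, Or.inl hz0K1⟩
    rcases huS with huK1 | huK2
    · -- first hit is in K1, hence equals v; then Q ++ W.reverse avoids K2
      have huv : u = v := hP u (hQ2 u Q.end_mem_support) huK1
      subst huv
      obtain ⟨z, hz, hzK2⟩ := hK2.1.2 x hx y hy (Q.append W.reverse)
      rw [SimpleGraph.Walk.mem_support_append_iff] at hz
      rcases hz with hz | hz
      · exact hvK2 ((hQ1 z hz (Or.inr hzK2)) ▸ hzK2)
      · rw [SimpleGraph.Walk.support_reverse, List.mem_reverse] at hz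
        exact hW z hz hzK2
    · -- first hit is in K2 : it lies in NR G Y K1 ⊆ NR G Y K2, contradiction
      have huK1' : u ∉ K1 := by
        intro h
        exact hvK2 ((hP u (hQ2 u Q.end_mem_support) h) ▸ huK2)
      have hQK1 : ∀ z ∈ Q.support, z ∉ K1 := fun z hz hzK1 =>
        huK1' ((hQ1 z hz (Or.inl hzK1)) ▸ hzK1)
      have hu : u ∈ NR G Y K1 := by
        refine ⟨hQK1 u Q.end_mem_support, ?_⟩
        rintro ⟨y'', hy'', Q2, hQ2'⟩
        obtain ⟨z, hz, hzK1⟩ := hK1.1.2 x hx y'' hy'' (Q.append Q2.reverse)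
        rw [SimpleGraph.Walk.mem_support_append_iff] at hz
        rcases hz with hz | hz
        · exact hQK1 z hz hzK1
        · rw [SimpleGraph.Walk.support_reverse, List.mem_reverse] at hz
          exact hQ2' z hz hzK1
      exact (hle hu).1 huK2
  · -- backward
    intro hsub v hv
    obtain ⟨hvK1, hvr⟩ := hv
    have hvK2 : v ∉ K2 := by
      intro hvK2
      have hne : ¬ IsSeparator G X Y (K2 \ {v}) :=
        hK2.2 (K2 \ {v}) (Set.sdiff_singleton_ssubset.mpr hvK2)
      have hsub' : (K2 \ {v}) ⊆ (X ∪ Y)ᶜ := Set.diff_subset.trans hK2.1.1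
      have hne2 : ∃ x ∈ X, ∃ y'' ∈ Y, ∃ P : G.Walk x y'',
          ∀ z ∈ P.support, z ∈ K2 → z = v := by
        by_contra hcon
        push_neg at hcon
        refine hne ⟨hsub', fun x hx y'' hy'' P => ?_⟩
        obtain ⟨z, hz, hzK2, hzv⟩ := hcon x hx y'' hy'' P
        exact ⟨z, hz, hzK2, hzv⟩
      obtain ⟨x, hx, y', hy', P, hP⟩ := hne2
      obtain ⟨z0, hz0s, hz0K2⟩ := hK2.1.2 x hx y' hy' P
      obtain ⟨u, huS, Q, hQ1, hQ2⟩ := firstHit P.reverse (K1 ∪ K2)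
        ⟨z0, by rw [SimpleGraph.Walk.support_reverse, List.mem_reverse]; exact hz0s,
          Or.inr hz0K2⟩
      have hQ2' : ∀ z ∈ Q.support, z ∈ P.support := by
        intro z hz
        have := hQ2 z hz
        rwa [SimpleGraph.Walk.support_reverse, List.mem_reverse] at this
      rcases huS with huK1 | huK2
      · -- u ∈ K1 \ K2 but reachable from Y avoiding K2
        have huK2' : u ∉ K2 := by
          intro h
          have : u = v := hP u (hQ2' u Q.end_mem_support) h
          exact hvK1 (this ▸ huK1)
        have hu := hsub ⟨huK1, huK2'⟩
        exact hu.2 ⟨y', hy', Q, fun z hz hzK2 =>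
          huK2' ((hQ1 z hz (Or.inr hzK2)) ▸ hzK2)⟩
      · -- u ∈ K2 hence u = v, and Q reaches v avoiding K1
        have huv : u = v := hP u (hQ2' u Q.end_mem_support) huK2
        subst huv
        refine hvr ⟨y', hy', Q, fun z hz hzK1 => ?_⟩
        exact hvK1 ((hQ1 z hz (Or.inl hzK1)) ▸ hzK1)
    refine ⟨hvK2, ?_⟩
    rintro ⟨y, hy, W, hW⟩
    have hmeet : ∃ z ∈ W.support, z ∈ K1 := by
      by_contra hc
      push_neg at hc
      exact hvr ⟨y, hy, W, hc⟩
    obtain ⟨u, huK1, Q, hQ1, hQ2⟩ := firstHit W K1 hmeet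
    have huK2 : u ∉ K2 := fun h => hW u (hQ2 u Q.end_mem_support) h
    exact (hsub ⟨huK1, huK2⟩).2
      ⟨y, hy, Q, fun z hz hzK2 => hW z (hQ2 z hz) hzK2⟩
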